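/- If L = (l_{ij}) is a minimal feasible list of order n, then l_{ij} ≤ C(n,2) + 1 for each pair i, j ∈ [n]. -/
import Mathlib


open Finset

/-- Two permutations are adjacent if every element's position changes by at most one. -/
def Adjacent {n : ℕ} (π σ : Equiv.Perm (Fin n)) : Prop :=
  ∀ i, ((π i : ℤ) - (σ i : ℤ)).natAbs ≤ 1

/-- Number of times wires `i` and `j` swap in the sequence `T` of height `h`. -/
def SwapCount {n : ℕ} (T : ℕ → Equiv.Perm (Fin n)) (h : ℕ) (i j : Fin n) : ℕ :=
  ((Finset.range (h - 1)).filter fun t => T t i = T (t+1) j ∧ T t j = T (t+1) i).card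

/-- A tangle of height `h`: a nonempty sequence of permutations with consecutive ones adjacent. -/
def IsTangle {n : ℕ} (T : ℕ → Equiv.Perm (Fin n)) (h : ℕ) : Prop :=
  1 ≤ h ∧ ∀ t, t + 1 < h → Adjacent (T t) (T (t+1))

/-- A tangle starting at the identity realizing the list `l`. -/
def Realizes {n : ℕ} (T : ℕ → Equiv.Perm (Fin n)) (h : ℕ) (l : Fin n → Fin n → ℕ) : Prop :=
  IsTangle T h ∧ T 0 = 1 ∧ ∀ i j, i ≠ j → SwapCount T h i j = l i j

/-- A list is feasible if some tangle starting at the identity realizes it. -/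
def Feasible {n : ℕ} (l : Fin n → Fin n → ℕ) : Prop :=
  ∃ h T, Realizes T h l

/-- A list is consistent if the map `id_n L` is a permutation of `[n]`. -/
def Consistent {n : ℕ} (l : Fin n → Fin n → ℕ) : Prop :=
  ∃ ρ : Equiv.Perm (Fin n), ∀ i : Fin n,
    ((i : ℤ) + ((Finset.univ.filter fun j => i < j ∧ Odd (l i j)).card : ℤ)
      - ((Finset.univ.filter fun j => j < i ∧ Odd (l i j)).card : ℤ)) = (ρ i : ℤ)


set_option maxHeartbeats 2000000

namespace TangleAux

variable {n : ℕ}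

/-- Crossing predicate. -/
abbrev XP (T : ℕ → Equiv.Perm (Fin n)) (t : ℕ) (i j : Fin n) : Prop :=
  T t i = T (t+1) j ∧ T t j = T (t+1) i

/-- Count of crossings of wires i,j among steps in A. -/
def cnt (T : ℕ → Equiv.Perm (Fin n)) (i j : Fin n) (A : Finset ℕ) : ℕ :=
  (A.filter fun t => XP T t i j).card

lemma swapCount_eq_cnt (T : ℕ → Equiv.Perm (Fin n)) (h : ℕ) (i j : Fin n) :
    SwapCount T h i j = cnt T i j (Finset.range (h-1)) := rfl

lemma XP.symm {T : ℕ → Equiv.Perm (Fin n)} {t : ℕ} {i j : Fin n} (hx : XP T t i j) :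
    XP T t j i := ⟨hx.2, hx.1⟩

lemma xp_comm (T : ℕ → Equiv.Perm (Fin n)) (t : ℕ) (i j : Fin n) :
    XP T t i j ↔ XP T t j i := ⟨XP.symm, XP.symm⟩

lemma cnt_symm (T : ℕ → Equiv.Perm (Fin n)) (i j : Fin n) (A : Finset ℕ) :
    cnt T i j A = cnt T j i A := by
  unfold cnt
  congr 1
  apply Finset.filter_congr
  intro t _
  simp [xp_comm T t i j]

/-- At a crossing of p,q there is no simultaneous crossing of p with another wire. -/
lemma cross_unique {T : ℕ → Equiv.Perm (Fin n)} {t : ℕ} {p q d : Fin n}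
    (h1 : XP T t p q) (h2 : XP T t p d) : d = q := by
  have := h1.1.symm.trans h2.1
  exact ((T (t+1)).injective this).symm

/-- Order-flip lemma: with adjacency, a pair's relative order flips iff it crosses. -/
lemma flip_iff {T : ℕ → Equiv.Perm (Fin n)} {t : ℕ}
    (hadj : Adjacent (T t) (T (t+1))) {i j : Fin n} (hij : i ≠ j) :
    XP T t i j ↔ ((T t i < T t j) ↔ ¬(T (t+1) i < T (t+1) j)) := by
  have h1 := hadj i
  have h2 := hadj j
  have e1 : (T t i).val ≠ (T t j).val := fun hh => hij ((T t).injective (Fin.ext hh))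
  have e2 : (T (t+1) i).val ≠ (T (t+1) j).val := fun hh => hij ((T (t+1)).injective (Fin.ext hh))
  constructor
  · rintro ⟨ha, hb⟩
    have ha' : (T t i).val = (T (t+1) j).val := by rw [ha]
    have hb' : (T t j).val = (T (t+1) i).val := by rw [hb]
    simp only [Fin.lt_def]
    omega
  · intro hiff
    simp only [Fin.lt_def] at hiff
    have ha : (T t i).val = (T (t+1) j).val := by omega
    have hb : (T t j).val = (T (t+1) i).val := by omega
    exact ⟨Fin.ext ha, Fin.ext hb⟩

end TangleAux

namespace TangleAux
variable {n : ℕ}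
lemma cnt_eq_sum (T : ℕ → Equiv.Perm (Fin n)) (i j : Fin n) (A : Finset ℕ) :
    cnt T i j A = ∑ t ∈ A, if XP T t i j then 1 else 0 := by
  unfold cnt
  rw [Finset.card_filter]
lemma cnt_parity {T : ℕ → Equiv.Perm (Fin n)} {h : ℕ} (ht : IsTangle T h)
    {i j : Fin n} (hij : i ≠ j) (u : ℕ) :
    ∀ v, u ≤ v → v < h →
      (Even (cnt T i j (Finset.Ico u v)) ↔ ((T u i < T u j) ↔ (T v i < T v j))) := by
  intro v
  induction v with
  | zero =>
      intro hu _
      have hu0 : u = 0 := by omega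
      subst hu0
      simp [cnt]
  | succ v ih =>
      intro hu hv
      rcases Nat.lt_or_ge u (v+1) with hlt | hge
      · have hu' : u ≤ v := by omega
        have hv' : v < h := by omega
        have IH := ih hu' hv'
        have hadj : Adjacent (T v) (T (v+1)) := ht.2 v hv
        have hflip := flip_iff hadj hij
        by_cases hX : XP T v i j
        · have hsum : cnt T i j (Finset.Ico u (v+1)) = cnt T i j (Finset.Ico u v) + 1 := by
            rw [cnt_eq_sum, cnt_eq_sum, Finset.sum_Ico_succ_top hu']
            simp only [if_pos hX]
          rw [hsum, Nat.even_add_one, IH]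
          rw [hflip] at hX
          tauto
        · have hsum : cnt T i j (Finset.Ico u (v+1)) = cnt T i j (Finset.Ico u v) := by
            rw [cnt_eq_sum, cnt_eq_sum, Finset.sum_Ico_succ_top hu']
            simp only [if_neg hX, Nat.add_zero]
          rw [hsum, IH]
          rw [hflip] at hX
          have hsame : (T v i < T v j) ↔ (T (v+1) i < T (v+1) j) := by tauto
          rw [hsame]
      · have : u = v + 1 := by omega
        subst this
        simp [cnt]
lemma side_of_adjacent_pos {π : Equiv.Perm (Fin n)} {p q d : Fin n}
    (hdp : d ≠ p) (hdq : d ≠ q)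
    (hadj : (π p).val = (π q).val + 1 ∨ (π q).val = (π p).val + 1) :
    (π d < π p ↔ π d < π q) := by
  have e1 : (π d).val ≠ (π p).val := fun hh => hdp (π.injective (Fin.ext hh))
  have e2 : (π d).val ≠ (π q).val := fun hh => hdq (π.injective (Fin.ext hh))
  simp only [Fin.lt_def]
  omega

/-- positions of p,q are adjacent (differ by one) at both ends of a crossing step. -/
lemma cross_pos_adj {T : ℕ → Equiv.Perm (Fin n)} {t : ℕ} {p q : Fin n}
    (hadj : Adjacent (T t) (T (t+1))) (hpq : p ≠ q) (hx : XP T t p q) :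
    ((T t p).val = (T t q).val + 1 ∨ (T t q).val = (T t p).val + 1) ∧
    ((T (t+1) p).val = (T (t+1) q).val + 1 ∨ (T (t+1) q).val = (T (t+1) p).val + 1) := by
  have h1 := hadj p
  have h2 := hadj q
  have e1 : (T t p).val ≠ (T t q).val := fun hh => hpq ((T t).injective (Fin.ext hh))
  have e2 : (T (t+1) p).val ≠ (T (t+1) q).val := fun hh => hpq ((T (t+1)).injective (Fin.ext hh))
  have ha : (T t p).val = (T (t+1) q).val := by rw [hx.1]
  have hb : (T t q).val = (T (t+1) p).val := by rw [hx.2]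
  omega

/-- Between two crossings of p and q, any other wire crosses p and q with the same parity. -/
lemma imbalance_even {T : ℕ → Equiv.Perm (Fin n)} {h : ℕ} (ht : IsTangle T h)
    {p q d : Fin n} (hpq : p ≠ q) (hdp : d ≠ p) (hdq : d ≠ q)
    {s s' : ℕ} (hss : s < s') (hs' : s' + 1 < h)
    (hXs : XP T s p q) (hXs' : XP T s' p q) :
    cnt T p d (Finset.Ico (s+1) s') % 2 = cnt T q d (Finset.Ico (s+1) s') % 2 := by
  have hs1 : s + 1 < h := by omega
  have hadj_s : Adjacent (T s) (T (s+1)) := ht.2 s hs1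
  have hadj_s' : Adjacent (T s') (T (s'+1)) := ht.2 s' hs'
  have hP := cnt_parity ht (show d ≠ p from hdp) (s+1) s' (by omega) (by omega)
  have hQ := cnt_parity ht (show d ≠ q from hdq) (s+1) s' (by omega) (by omega)
  have hside1 : (T (s+1) d < T (s+1) p ↔ T (s+1) d < T (s+1) q) :=
    side_of_adjacent_pos hdp hdq (cross_pos_adj hadj_s hpq hXs).2
  have hside2 : (T s' d < T s' p ↔ T s' d < T s' q) :=
    side_of_adjacent_pos hdp hdq (cross_pos_adj hadj_s' hpq hXs').1
  have heq : Even (cnt T d p (Finset.Ico (s+1) s')) ↔ Even (cnt T d q (Finset.Ico (s+1) s')) := by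
    rw [hP, hQ]
    tauto
  rw [cnt_symm T p d, cnt_symm T q d]
  rw [Nat.even_iff, Nat.even_iff] at heq
  omega

end TangleAux

namespace TangleAux
variable {n : ℕ}

/-- If the interval between two crossings of p,q is unbalanced at wire d, then some
wire of the pair is crossed twice by d strictly inside. -/
lemma find_inner {T : ℕ → Equiv.Perm (Fin n)} {h : ℕ} (ht : IsTangle T h)
    {p q d : Fin n} (hpq : p ≠ q) (hdp : d ≠ p) (hdq : d ≠ q)
    {s s' : ℕ} (hss : s < s') (hs' : s' + 1 < h)
    (hXs : XP T s p q) (hXs' : XP T s' p q)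
    (hne : cnt T p d (Finset.Ico (s+1) s') ≠ cnt T q d (Finset.Ico (s+1) s')) :
    ∃ (w : Fin n) (t₁ t₂ : ℕ), (w = p ∨ w = q) ∧ s < t₁ ∧ t₁ < t₂ ∧ t₂ < s' ∧
      XP T t₁ w d ∧ XP T t₂ w d := by
  have hpar := imbalance_even ht hpq hdp hdq hss hs' hXs hXs'
  have key : ∀ w : Fin n, 2 ≤ cnt T w d (Finset.Ico (s+1) s') →
      ∃ (t₁ t₂ : ℕ), s < t₁ ∧ t₁ < t₂ ∧ t₂ < s' ∧ XP T t₁ w d ∧ XP T t₂ w d := by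
    intro w hw
    have h2 : 1 < ((Finset.Ico (s+1) s').filter fun t => XP T t w d).card := hw
    obtain ⟨a, haf, b, hbf, hab⟩ := Finset.one_lt_card.mp h2
    simp only [Finset.mem_filter, Finset.mem_Ico] at haf hbf
    rcases Nat.lt_or_ge a b with hlt | hge
    · exact ⟨a, b, by omega, hlt, by omega, haf.2, hbf.2⟩
    · have hlt : b < a := by omega
      exact ⟨b, a, by omega, hlt, by omega, hbf.2, haf.2⟩
  rcases Nat.lt_or_ge (cnt T p d (Finset.Ico (s+1) s')) (cnt T q d (Finset.Ico (s+1) s'))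
    with hlt | hge
  · obtain ⟨t₁, t₂, h1, h2, h3, h4, h5⟩ := key q (by omega)
    exact ⟨q, t₁, t₂, Or.inr rfl, h1, h2, h3, h4, h5⟩
  · obtain ⟨t₁, t₂, h1, h2, h3, h4, h5⟩ := key p (by omega)
    exact ⟨p, t₁, t₂, Or.inl rfl, h1, h2, h3, h4, h5⟩

/-- Descent: inside any interval bounded by two crossings of a pair there is a balanced
interval bounded by two crossings of some pair. -/
lemma descend2 {T : ℕ → Equiv.Perm (Fin n)} {h : ℕ} (ht : IsTangle T h) :
    ∀ N : ℕ, ∀ (p q : Fin n) (s s' : ℕ), p ≠ q → s < s' → s' + 1 < h →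
      XP T s p q → XP T s' p q → s' - s ≤ N →
      ∃ (u v : Fin n) (t₁ t₂ : ℕ), u ≠ v ∧ s ≤ t₁ ∧ t₁ < t₂ ∧ t₂ ≤ s' ∧
        XP T t₁ u v ∧ XP T t₂ u v ∧
        (∀ d, d ≠ u → d ≠ v →
          cnt T u d (Finset.Ico (t₁+1) t₂) = cnt T v d (Finset.Ico (t₁+1) t₂)) := by
  intro N
  induction N with
  | zero => intro p q s s' _ hss _ _ _ hN; omega
  | succ N ih =>
      intro p q s s' hpq hss hs' hXs hXs' hN
      by_cases hbal : ∀ d, d ≠ p → d ≠ q →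
          cnt T p d (Finset.Ico (s+1) s') = cnt T q d (Finset.Ico (s+1) s')
      · exact ⟨p, q, s, s', hpq, le_refl s, hss, le_refl s', hXs, hXs', hbal⟩
      · push_neg at hbal
        obtain ⟨d, hdp, hdq, hne⟩ := hbal
        obtain ⟨w, τ₁, τ₂, hwpq, hτ1, hτ12, hτ2, hX1, hX2⟩ :=
          find_inner ht hpq hdp hdq hss hs' hXs hXs' hne
        have hwd : w ≠ d := by
          rcases hwpq with rfl | rfl
          · exact fun hh => hdp hh.symm
          · exact fun hh => hdq hh.symm
        obtain ⟨u, v, t₁, t₂, huv, hb1, hb2, hb3, hc1, hc2, hc3⟩ :=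
          ih w d τ₁ τ₂ hwd hτ12 (by omega) hX1 hX2 (by omega)
        exact ⟨u, v, t₁, t₂, huv, by omega, hb2, by omega, hc1, hc2, hc3⟩

end TangleAux

namespace TangleAux
variable {n : ℕ}

lemma filter_split {s s' hh : ℕ} (hss : s < s') (hsh : s' + 1 < hh)
    (P : ℕ → Prop) [DecidablePred P] :
    ((Finset.range (hh-1)).filter P).card
      = ((Finset.Ico (s+1) s').filter P).card
        + (((Finset.range (hh-1)).filter fun t => ¬(s < t ∧ t < s')).filter P).card := by
  classical
  set c : ℕ → Prop := fun t => s < t ∧ t < s' with hc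
  have hB : (Finset.range (hh-1)).filter c = Finset.Ico (s+1) s' := by
    ext t
    simp only [hc, Finset.mem_filter, Finset.mem_range, Finset.mem_Ico]
    omega
  have hU := Finset.filter_union_filter_not_eq c (Finset.range (hh-1))
  have hdisj : Disjoint (((Finset.range (hh-1)).filter c).filter P)
      (((Finset.range (hh-1)).filter fun t => ¬ c t).filter P) :=
    (Finset.disjoint_filter_filter_not _ _ c).mono
      (Finset.filter_subset _ _) (Finset.filter_subset _ _)
  calc ((Finset.range (hh-1)).filter P).card
      = ((((Finset.range (hh-1)).filter c) ∪ ((Finset.range (hh-1)).filter fun t => ¬ c t)).filter P).card := by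
        rw [hU]
    _ = (((Finset.range (hh-1)).filter c).filter P ∪ (((Finset.range (hh-1)).filter fun t => ¬ c t)).filter P).card := by
        rw [Finset.filter_union]
    _ = (((Finset.range (hh-1)).filter c).filter P).card
        + ((((Finset.range (hh-1)).filter fun t => ¬ c t)).filter P).card :=
        Finset.card_union_of_disjoint hdisj
    _ = _ := by rw [hB]

lemma filter_split_ite {s s' hh : ℕ} (hss : s < s') (hsh : s' + 1 < hh)
    (P Q : ℕ → Prop) [DecidablePred P] [DecidablePred Q] :
    ((Finset.range (hh-1)).filter fun t => if s < t ∧ t < s' then P t else Q t).card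
      = ((Finset.Ico (s+1) s').filter P).card
        + (((Finset.range (hh-1)).filter fun t => ¬(s < t ∧ t < s')).filter Q).card := by
  classical
  rw [filter_split hss hsh (fun t => if s < t ∧ t < s' then P t else Q t)]
  congr 1
  · apply congrArg
    apply Finset.filter_congr
    intro t htmem
    simp only [Finset.mem_Ico] at htmem
    rw [if_pos (by omega)]
  · apply congrArg
    apply Finset.filter_congr
    intro t htmem
    simp only [Finset.mem_filter] at htmem
    rw [if_neg htmem.2]

/-- The reflected tangle. -/
def reflT (T : ℕ → Equiv.Perm (Fin n)) (p q : Fin n) (s s' : ℕ) : ℕ → Equiv.Perm (Fin n) :=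
  fun t => if s < t ∧ t ≤ s' then T t * Equiv.swap p q else T t

variable {T : ℕ → Equiv.Perm (Fin n)} {p q : Fin n} {s s' : ℕ}

lemma reflT_low {t : ℕ} (ht : t ≤ s) : reflT T p q s s' t = T t := by
  unfold reflT; rw [if_neg (by omega)]

lemma reflT_mid {t : ℕ} (h1 : s < t) (h2 : t ≤ s') :
    reflT T p q s s' t = T t * Equiv.swap p q := by
  unfold reflT; rw [if_pos ⟨h1, h2⟩]

lemma reflT_high {t : ℕ} (ht : s' < t) : reflT T p q s s' t = T t := by
  unfold reflT; rw [if_neg (by omega)]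

end TangleAux

namespace TangleAux
variable {n : ℕ} {T : ℕ → Equiv.Perm (Fin n)} {p q : Fin n} {s s' : ℕ}

lemma zoneO (hss : s < s') {i j : Fin n}
    (hip : i ≠ p) (hiq : i ≠ q) (hjp : j ≠ p) (hjq : j ≠ q) (t : ℕ) :
    XP (reflT T p q s s') t i j ↔ XP T t i j := by
  have hi : ∀ u, reflT T p q s s' u i = T u i := by
    intro u
    unfold reflT
    by_cases hc : s < u ∧ u ≤ s'
    · rw [if_pos hc, Equiv.Perm.mul_apply, Equiv.swap_apply_of_ne_of_ne hip hiq]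
    · rw [if_neg hc]
  have hj : ∀ u, reflT T p q s s' u j = T u j := by
    intro u
    unfold reflT
    by_cases hc : s < u ∧ u ≤ s'
    · rw [if_pos hc, Equiv.Perm.mul_apply, Equiv.swap_apply_of_ne_of_ne hjp hjq]
    · rw [if_neg hc]
  unfold XP
  rw [hi t, hi (t+1), hj t, hj (t+1)]

lemma zonePQ (hpq : p ≠ q) (hss : s < s')
    (hXs : XP T s p q) (hXs' : XP T s' p q) (t : ℕ) :
    XP (reflT T p q s s') t p q ↔ (XP T t p q ∧ t ≠ s ∧ t ≠ s') := by
  have hzone : t < s ∨ t = s ∨ (s < t ∧ t < s') ∨ t = s' ∨ s' < t := by omega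
  unfold XP
  rcases hzone with h1 | rfl | ⟨h1, h2⟩ | rfl | h1
  · rw [reflT_low (by omega), reflT_low (by omega)]
    exact ⟨fun hx => ⟨hx, by omega, by omega⟩, fun hx => hx.1⟩
  · rw [reflT_low (by omega), reflT_mid (by omega) (by omega)]
    simp only [Equiv.Perm.mul_apply, Equiv.swap_apply_left, Equiv.swap_apply_right]
    constructor
    · rintro ⟨hA, -⟩
      exact absurd ((T (t+1)).injective (hXs.1.symm.trans hA)).symm hpq
    · rintro ⟨-, h2, -⟩
      exact (h2 rfl).elim
  · rw [reflT_mid h1 (by omega), reflT_mid (by omega) (by omega)]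
    simp only [Equiv.Perm.mul_apply, Equiv.swap_apply_left, Equiv.swap_apply_right]
    constructor
    · rintro ⟨hA, hB⟩
      exact ⟨⟨hB, hA⟩, by omega, by omega⟩
    · rintro ⟨⟨hA, hB⟩, -, -⟩
      exact ⟨hB, hA⟩
  · rw [reflT_mid (by omega) (by omega), reflT_high (by omega)]
    simp only [Equiv.Perm.mul_apply, Equiv.swap_apply_left, Equiv.swap_apply_right]
    constructor
    · rintro ⟨-, hB⟩
      exact absurd ((T (t+1)).injective (hXs'.1.symm.trans hB)).symm hpq
    · rintro ⟨-, -, h3⟩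
      exact (h3 rfl).elim
  · rw [reflT_high (by omega), reflT_high (by omega)]
    exact ⟨fun hx => ⟨hx, by omega, by omega⟩, fun hx => hx.1⟩

lemma zonePD (hpq : p ≠ q) (hss : s < s')
    (hXs : XP T s p q) (hXs' : XP T s' p q) {d : Fin n} (hdp : d ≠ p) (hdq : d ≠ q) (t : ℕ) :
    XP (reflT T p q s s') t p d ↔
      (if s < t ∧ t < s' then XP T t q d else XP T t p d) := by
  have hzone : t < s ∨ t = s ∨ (s < t ∧ t < s') ∨ t = s' ∨ s' < t := by omega
  unfold XP
  rcases hzone with h1 | rfl | ⟨h1, h2⟩ | rfl | h1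
  · rw [reflT_low (by omega), reflT_low (by omega), if_neg (by omega)]
  · rw [reflT_low (by omega), reflT_mid (by omega) (by omega), if_neg (by omega)]
    simp only [Equiv.Perm.mul_apply, Equiv.swap_apply_left,
      Equiv.swap_apply_of_ne_of_ne hdp hdq]
    constructor
    · rintro ⟨hA, -⟩
      exact absurd ((T (t+1)).injective (hXs.1.symm.trans hA)).symm hdq
    · rintro ⟨hA, -⟩
      exact absurd ((T (t+1)).injective (hXs.1.symm.trans hA)).symm hdq
  · rw [reflT_mid h1 (by omega), reflT_mid (by omega) (by omega), if_pos ⟨h1, h2⟩]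
    simp only [Equiv.Perm.mul_apply, Equiv.swap_apply_left,
      Equiv.swap_apply_of_ne_of_ne hdp hdq]
  · rw [reflT_mid (by omega) (by omega), reflT_high (by omega), if_neg (by omega)]
    simp only [Equiv.Perm.mul_apply, Equiv.swap_apply_left,
      Equiv.swap_apply_of_ne_of_ne hdp hdq]
    constructor
    · rintro ⟨-, hB⟩
      exact absurd ((T t).injective (hB.trans hXs'.2.symm)) hdq
    · rintro ⟨-, hB⟩
      exact absurd ((T t).injective (hB.trans hXs'.2.symm)) hdq
  · rw [reflT_high (by omega), reflT_high (by omega), if_neg (by omega)]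

lemma zoneQD (hpq : p ≠ q) (hss : s < s')
    (hXs : XP T s p q) (hXs' : XP T s' p q) {d : Fin n} (hdp : d ≠ p) (hdq : d ≠ q) (t : ℕ) :
    XP (reflT T p q s s') t q d ↔
      (if s < t ∧ t < s' then XP T t p d else XP T t q d) := by
  have hzone : t < s ∨ t = s ∨ (s < t ∧ t < s') ∨ t = s' ∨ s' < t := by omega
  unfold XP
  rcases hzone with h1 | rfl | ⟨h1, h2⟩ | rfl | h1
  · rw [reflT_low (by omega), reflT_low (by omega), if_neg (by omega)]
  · rw [reflT_low (by omega), reflT_mid (by omega) (by omega), if_neg (by omega)]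
    simp only [Equiv.Perm.mul_apply, Equiv.swap_apply_right,
      Equiv.swap_apply_of_ne_of_ne hdp hdq]
    constructor
    · rintro ⟨hA, -⟩
      exact absurd ((T (t+1)).injective (hXs.2.symm.trans hA)).symm hdp
    · rintro ⟨hA, -⟩
      exact absurd ((T (t+1)).injective (hXs.2.symm.trans hA)).symm hdp
  · rw [reflT_mid h1 (by omega), reflT_mid (by omega) (by omega), if_pos ⟨h1, h2⟩]
    simp only [Equiv.Perm.mul_apply, Equiv.swap_apply_right,
      Equiv.swap_apply_of_ne_of_ne hdp hdq]
  · rw [reflT_mid (by omega) (by omega), reflT_high (by omega), if_neg (by omega)]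
    simp only [Equiv.Perm.mul_apply, Equiv.swap_apply_right,
      Equiv.swap_apply_of_ne_of_ne hdp hdq]
    constructor
    · rintro ⟨hA, -⟩
      exact absurd ((T (t+1)).injective (hA.symm.trans hXs'.1)) hdq
    · rintro ⟨-, hB⟩
      exact absurd ((T t).injective (hB.trans hXs'.1.symm)) hdp
  · rw [reflT_high (by omega), reflT_high (by omega), if_neg (by omega)]

end TangleAux

namespace TangleAux
variable {n : ℕ} {T : ℕ → Equiv.Perm (Fin n)} {p q : Fin n} {s s' : ℕ}

lemma swapCount_def (M : ℕ → Equiv.Perm (Fin n)) (hh : ℕ) (i j : Fin n) :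
    SwapCount M hh i j = ((Finset.range (hh-1)).filter fun t => XP M t i j).card := rfl

lemma swapCount_comm (M : ℕ → Equiv.Perm (Fin n)) (hh : ℕ) (i j : Fin n) :
    SwapCount M hh i j = SwapCount M hh j i := by
  rw [swapCount_def, swapCount_def]
  congr 1
  apply Finset.filter_congr
  intro t _
  exact ⟨fun hx => ⟨hx.2, hx.1⟩, fun hx => ⟨hx.2, hx.1⟩⟩

lemma reflect_feasible {h : ℕ} {l : Fin n → Fin n → ℕ}
    (hreal : Realizes T h l) (hpq : p ≠ q) (hss : s < s') (hsh : s' + 1 < h)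
    (hXs : XP T s p q) (hXs' : XP T s' p q)
    (hbal : ∀ d, d ≠ p → d ≠ q →
      cnt T p d (Finset.Ico (s+1) s') = cnt T q d (Finset.Ico (s+1) s')) :
    Feasible (fun i j => if (i = p ∧ j = q) ∨ (i = q ∧ j = p) then l i j - 2 else l i j) := by
  classical
  obtain ⟨⟨h1, hadj⟩, h0, hcnt⟩ := hreal
  have hls : ∀ i j : Fin n, i ≠ j → l i j = l j i := by
    intro i j hij
    rw [← hcnt i j hij, ← hcnt j i hij.symm, swapCount_comm]
  refine ⟨h, reflT T p q s s', ⟨⟨h1, ?_⟩, ?_, ?_⟩⟩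
  · -- adjacency
    intro t htl
    have horig := hadj t htl
    have hzone : t < s ∨ t = s ∨ (s < t ∧ t < s') ∨ t = s' ∨ s' < t := by omega
    rcases hzone with hz | hz0 | ⟨hz1, hz2⟩ | hz0 | hz
    · rw [reflT_low (by omega : t ≤ s), reflT_low (by omega : t + 1 ≤ s)]
      exact horig
    · rw [hz0] at horig ⊢
      rw [reflT_low (le_refl s), reflT_mid (by omega) (by omega)]
      intro x
      by_cases hx : x = p
      · subst hx
        simp only [Equiv.Perm.mul_apply, Equiv.swap_apply_left]
        rw [hXs.1, sub_self]
        simp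
      · by_cases hx' : x = q
        · subst hx'
          simp only [Equiv.Perm.mul_apply, Equiv.swap_apply_right]
          rw [hXs.2, sub_self]
          simp
        · simp only [Equiv.Perm.mul_apply, Equiv.swap_apply_of_ne_of_ne hx hx']
          exact horig x
    · rw [reflT_mid hz1 (by omega), reflT_mid (by omega) (by omega)]
      intro x
      simp only [Equiv.Perm.mul_apply]
      exact horig (Equiv.swap p q x)
    · rw [hz0] at horig ⊢
      rw [reflT_mid hss (le_refl s'), reflT_high (by omega)]
      intro x
      by_cases hx : x = p
      · subst hx
        simp only [Equiv.Perm.mul_apply, Equiv.swap_apply_left]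
        rw [hXs'.2, sub_self]
        simp
      · by_cases hx' : x = q
        · subst hx'
          simp only [Equiv.Perm.mul_apply, Equiv.swap_apply_right]
          rw [hXs'.1, sub_self]
          simp
        · simp only [Equiv.Perm.mul_apply, Equiv.swap_apply_of_ne_of_ne hx hx']
          exact horig x
    · rw [reflT_high (by omega : s' < t), reflT_high (by omega : s' < t + 1)]
      exact horig
  · -- starts at identity
    rw [reflT_low (Nat.zero_le s), h0]
  · -- counts
    have hsh' : s < h - 1 := by omega
    have hsh'' : s' < h - 1 := by omega
    have casePQ : SwapCount (reflT T p q s s') h p q = l p q - 2 := by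
      rw [swapCount_def]
      have e1 : (Finset.range (h-1)).filter (fun t => XP (reflT T p q s s') t p q)
          = ((Finset.range (h-1)).filter fun t => XP T t p q) \ {s, s'} := by
        ext t
        have hzz := zonePQ hpq hss hXs hXs' t
        simp only [Finset.mem_filter, Finset.mem_sdiff, Finset.mem_insert,
          Finset.mem_singleton, Finset.mem_range]
        tauto
      rw [e1]
      have hsub : ({s, s'} : Finset ℕ) ⊆ ((Finset.range (h-1)).filter fun t => XP T t p q) := by
        intro x hx
        simp only [Finset.mem_insert, Finset.mem_singleton] at hx
        rcases hx with rfl | rfl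
        · simp only [Finset.mem_filter, Finset.mem_range]
          exact ⟨hsh', hXs⟩
        · simp only [Finset.mem_filter, Finset.mem_range]
          exact ⟨hsh'', hXs'⟩
      rw [Finset.card_sdiff_of_subset hsub]
      have hc2 : ({s, s'} : Finset ℕ).card = 2 := by
        rw [Finset.card_insert_of_notMem (by simp; omega), Finset.card_singleton]
      rw [hc2, ← swapCount_def, hcnt p q hpq]
    have casePD : ∀ d : Fin n, d ≠ p → d ≠ q →
        SwapCount (reflT T p q s s') h p d = l p d := by
      intro d hdp hdq
      have hbal' : ((Finset.Ico (s+1) s').filter fun t => XP T t p d).card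
          = ((Finset.Ico (s+1) s').filter fun t => XP T t q d).card := hbal d hdp hdq
      rw [swapCount_def]
      have e1 : (Finset.range (h-1)).filter (fun t => XP (reflT T p q s s') t p d)
          = (Finset.range (h-1)).filter
              (fun t => if s < t ∧ t < s' then XP T t q d else XP T t p d) :=
        Finset.filter_congr (fun t _ => zonePD hpq hss hXs hXs' hdp hdq t)
      rw [e1, filter_split_ite hss hsh, ← hbal',
        ← filter_split hss hsh (fun t => XP T t p d), ← swapCount_def,
        hcnt p d (Ne.symm hdp)]
    have caseQD : ∀ d : Fin n, d ≠ p → d ≠ q →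
        SwapCount (reflT T p q s s') h q d = l q d := by
      intro d hdp hdq
      have hbal' : ((Finset.Ico (s+1) s').filter fun t => XP T t p d).card
          = ((Finset.Ico (s+1) s').filter fun t => XP T t q d).card := hbal d hdp hdq
      rw [swapCount_def]
      have e1 : (Finset.range (h-1)).filter (fun t => XP (reflT T p q s s') t q d)
          = (Finset.range (h-1)).filter
              (fun t => if s < t ∧ t < s' then XP T t p d else XP T t q d) :=
        Finset.filter_congr (fun t _ => zoneQD hpq hss hXs hXs' hdp hdq t)
      rw [e1, filter_split_ite hss hsh, hbal',
        ← filter_split hss hsh (fun t => XP T t q d), ← swapCount_def,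
        hcnt q d (Ne.symm hdq)]
    have caseO : ∀ i j : Fin n, i ≠ j → i ≠ p → i ≠ q → j ≠ p → j ≠ q →
        SwapCount (reflT T p q s s') h i j = l i j := by
      intro i j hij hip hiq hjp hjq
      rw [swapCount_def]
      have e1 : (Finset.range (h-1)).filter (fun t => XP (reflT T p q s s') t i j)
          = (Finset.range (h-1)).filter (fun t => XP T t i j) :=
        Finset.filter_congr (fun t _ => zoneO hss hip hiq hjp hjq t)
      rw [e1, ← swapCount_def, hcnt i j hij]
    intro i j hij
    show SwapCount (reflT T p q s s') h i j
      = if (i = p ∧ j = q) ∨ (i = q ∧ j = p) then l i j - 2 else l i j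
    by_cases hip : i = p
    · by_cases hjq : j = q
      · rw [hip, hjq, if_pos (Or.inl ⟨rfl, rfl⟩)]
        exact casePQ
      · have hjp : j ≠ p := fun hh => hij (hip.trans hh.symm)
        rw [hip, if_neg (by rintro (⟨-, hc⟩ | ⟨hc, -⟩); exacts [hjq hc, hpq hc])]
        exact casePD j hjp hjq
    · by_cases hiq : i = q
      · by_cases hjp : j = p
        · rw [hiq, hjp, if_pos (Or.inr ⟨rfl, rfl⟩), swapCount_comm, hls q p (Ne.symm hpq)]
          exact casePQ
        · have hjq : j ≠ q := fun hh => hij (hiq.trans hh.symm)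
          rw [hiq, if_neg (by rintro (⟨hc, -⟩ | ⟨-, hc⟩); exacts [hpq hc.symm, hjp hc])]
          exact caseQD j hjp hjq
      · by_cases hjp : j = p
        · rw [hjp, if_neg (by rintro (⟨hc, -⟩ | ⟨hc, -⟩); exacts [hip hc, hiq hc]),
            swapCount_comm, hls i p hip]
          exact casePD i hip hiq
        · by_cases hjq : j = q
          · rw [hjq, if_neg (by rintro (⟨hc, -⟩ | ⟨hc, -⟩); exacts [hip hc, hiq hc]),
              swapCount_comm, hls i q hiq]
            exact caseQD i hip hiq
          · rw [if_neg (by rintro (⟨hc, -⟩ | ⟨hc, -⟩); exacts [hip hc, hiq hc])]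
            exact caseO i j hij hip hiq hjp hjq

end TangleAux

namespace TangleAux
variable {n : ℕ}

lemma pairs_card (n : ℕ) :
    ((Finset.univ : Finset (Fin n × Fin n)).filter fun pr => pr.1 < pr.2).card
      = n.choose 2 := by
  classical
  rw [Finset.card_eq_sum_card_fiberwise
    (f := Prod.snd) (t := Finset.univ) (fun x _ => Finset.mem_univ _)]
  have hfib : ∀ y : Fin n,
      (((Finset.univ : Finset (Fin n × Fin n)).filter fun pr => pr.1 < pr.2).filter
        (fun pr => pr.snd = y)).card = (y : ℕ) := by
    intro y
    rw [← Fin.card_Iio y]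
    apply Finset.card_bij (fun pr _ => pr.1)
    · intro pr hpr
      simp only [Finset.mem_filter, Finset.mem_univ, true_and] at hpr
      simp only [Finset.mem_Iio]
      rw [← hpr.2]
      exact hpr.1
    · intro pr hpr pr' hpr' hh
      simp only [Finset.mem_filter, Finset.mem_univ, true_and] at hpr hpr'
      exact Prod.ext hh (hpr.2.trans hpr'.2.symm)
    · intro x hx
      simp only [Finset.mem_Iio] at hx
      exact ⟨(x, y), by simp [hx], rfl⟩
  rw [Finset.sum_congr rfl (fun y _ => hfib y)]
  rw [show (∑ y : Fin n, (y : ℕ)) = ∑ i ∈ Finset.range n, i from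
    Fin.sum_univ_eq_sum_range (fun i => i) n]
  rw [Nat.choose_two_right]
  exact Finset.sum_range_id n

end TangleAux

open TangleAux

/-- Entries of a minimal feasible list are at most C(n,2) + 1. -/
theorem minimal_feasible_upper_bound_choose (n : ℕ) (l : Fin n → Fin n → ℕ)
    (hsym : ∀ i j, l i j = l j i) (hdiag : ∀ i, l i i = 0)
    (hfeas : Feasible l)
    (hmin : ∀ l' : Fin n → Fin n → ℕ, Feasible l' →
      (∀ i j, l' i j ≤ l i j) →
      (∀ i j, l' i j % 2 = l i j % 2) →
      (∀ i j, 0 < l i j → 0 < l' i j) →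
      l' = l) :
    ∀ i j : Fin n, l i j ≤ n.choose 2 + 1 := by
  classical
  intro a b
  by_cases hab : a = b
  · subst hab
    rw [hdiag]
    exact Nat.zero_le _
  · by_contra hbig
    push_neg at hbig
    obtain ⟨h, T, hreal⟩ := hfeas
    obtain ⟨ht, h0, hcnt⟩ := hreal
    have h1 : 1 ≤ h := ht.1
    have hn2 : 2 ≤ n := by
      rcases Nat.lt_or_ge n 2 with hn | hn
      · interval_cases n
        · exact a.elim0
        · exact absurd (Subsingleton.elim a b) hab
      · exact hn
    have hC1 : 1 ≤ n.choose 2 := Nat.choose_pos hn2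
    -- no valid reflection reduction exists for a minimal list
    have hnored : ∀ (p q : Fin n) (s s' : ℕ), p ≠ q → s < s' → s' + 1 < h →
        XP T s p q → XP T s' p q →
        (∀ d, d ≠ p → d ≠ q →
          cnt T p d (Finset.Ico (s+1) s') = cnt T q d (Finset.Ico (s+1) s')) →
        3 ≤ l p q → False := by
      intro p q s s' hpq hss hsh hXs hXs' hbal hl3
      have hfe := reflect_feasible ⟨ht, h0, hcnt⟩ hpq hss hsh hXs hXs' hbal
      have hle : ∀ i j : Fin n,
          (if (i = p ∧ j = q) ∨ (i = q ∧ j = p) then l i j - 2 else l i j) ≤ l i j := by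
        intro i j
        split_ifs <;> omega
      have hpar : ∀ i j : Fin n,
          (if (i = p ∧ j = q) ∨ (i = q ∧ j = p) then l i j - 2 else l i j) % 2
            = l i j % 2 := by
        intro i j
        split_ifs with hc
        · rcases hc with ⟨rfl, rfl⟩ | ⟨rfl, rfl⟩
          · omega
          · have := hsym i j
            omega
        · rfl
      have hsup : ∀ i j : Fin n, 0 < l i j →
          0 < (if (i = p ∧ j = q) ∨ (i = q ∧ j = p) then l i j - 2 else l i j) := by
        intro i j hpos
        split_ifs with hc
        · rcases hc with ⟨rfl, rfl⟩ | ⟨rfl, rfl⟩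
          · omega
          · have := hsym i j
            omega
        · exact hpos
      have heq := hmin _ hfe hle hpar hsup
      have heval := congrFun (congrFun heq p) q
      have hcond : ((p = p ∧ q = q) ∨ (p = q ∧ q = p)) := Or.inl ⟨rfl, rfl⟩
      rw [if_pos hcond] at heval
      omega
    -- the crossing set of (a,b)
    set Cr := (Finset.range (h-1)).filter (fun t => XP T t a b) with hCr
    have hmcard : Cr.card = l a b := hcnt a b hab
    set m := Cr.card with hm
    have hm2 : n.choose 2 + 2 ≤ m := by omega
    have e := Cr.orderIsoOfFin rfl
    set ts : Fin m → ℕ := fun k => (e k : ℕ) with htsdef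
    have hts_mem : ∀ k, ts k ∈ Cr := fun k => (e k).2
    have hts_mono : StrictMono ts := fun x y hxy => e.strictMono hxy
    have hts_range : ∀ k, ts k < h - 1 := by
      intro k
      have := hts_mem k
      rw [hCr, Finset.mem_filter, Finset.mem_range] at this
      exact this.1
    have hts_X : ∀ k, XP T (ts k) a b := by
      intro k
      have := hts_mem k
      rw [hCr, Finset.mem_filter] at this
      exact this.2
    -- each consecutive window hosts a fully-contained pair with exactly two crossings
    have hwin : ∀ (K K' : Fin m), (K : ℕ) + 1 = (K' : ℕ) →
        ∃ u v : Fin n, u < v ∧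
          (∀ t ∈ (Finset.range (h-1)).filter (fun t' => XP T t' u v),
            ts K < t ∧ t < ts K') ∧
          ((Finset.range (h-1)).filter (fun t' => XP T t' u v)).Nonempty := by
      intro K K' hKK'
      have h12 : ts K < ts K' := hts_mono (by rw [Fin.lt_def]; omega)
      have hX1 : XP T (ts K) a b := hts_X K
      have hX2 : XP T (ts K') a b := hts_X K'
      have ht2r : ts K' < h - 1 := hts_range K'
      by_cases hbal : ∀ d, d ≠ a → d ≠ b →
          cnt T a d (Finset.Ico (ts K + 1) (ts K')) = cnt T b d (Finset.Ico (ts K + 1) (ts K'))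
      · exact (hnored a b (ts K) (ts K') hab h12 (by omega) hX1 hX2 hbal (by omega)).elim
      · push_neg at hbal
        obtain ⟨d, hda, hdb, hne⟩ := hbal
        obtain ⟨w, τ₁, τ₂, hw, hτ1, hτ12, hτ2, hXw1, hXw2⟩ :=
          find_inner ht hab hda hdb h12 (by omega) hX1 hX2 hne
        have hwd : w ≠ d := by
          rcases hw with rfl | rfl
          exacts [Ne.symm hda, Ne.symm hdb]
        obtain ⟨u, v, u₁, u₂, huv, hb1, hb2, hb3, hXu1, hXu2, hubal⟩ :=
          descend2 ht (τ₂ - τ₁) w d τ₁ τ₂ hwd hτ12 (by omega) hXw1 hXw2 (le_refl _)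
        by_cases hl3 : 3 ≤ l u v
        · exact (hnored u v u₁ u₂ huv hb2 (by omega) hXu1 hXu2 hubal hl3).elim
        · have hu1r : u₁ < h - 1 := by omega
          have hu2r : u₂ < h - 1 := by omega
          have hsub : ({u₁, u₂} : Finset ℕ)
              ⊆ (Finset.range (h-1)).filter (fun t' => XP T t' u v) := by
            intro x hx
            simp only [Finset.mem_insert, Finset.mem_singleton] at hx
            rcases hx with rfl | rfl
            · rw [Finset.mem_filter, Finset.mem_range]
              exact ⟨hu1r, hXu1⟩
            · rw [Finset.mem_filter, Finset.mem_range]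
              exact ⟨hu2r, hXu2⟩
          have hcardle : ((Finset.range (h-1)).filter (fun t' => XP T t' u v)).card ≤ 2 := by
            have hcc : SwapCount T h u v = l u v := hcnt u v huv
            rw [swapCount_def] at hcc
            omega
          have hcard2 : ({u₁, u₂} : Finset ℕ).card = 2 := by
            rw [Finset.card_insert_of_notMem (by simp; omega), Finset.card_singleton]
          have heqset : ({u₁, u₂} : Finset ℕ)
              = (Finset.range (h-1)).filter (fun t' => XP T t' u v) :=
            Finset.eq_of_subset_of_card_le hsub (by omega)
          have hbounds : ∀ t ∈ (Finset.range (h-1)).filter (fun t' => XP T t' u v),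
              ts K < t ∧ t < ts K' := by
            intro t htmem
            rw [← heqset] at htmem
            simp only [Finset.mem_insert, Finset.mem_singleton] at htmem
            rcases htmem with rfl | rfl <;> omega
          have hne' : ((Finset.range (h-1)).filter (fun t' => XP T t' u v)).Nonempty :=
            ⟨u₁, by rw [← heqset]; simp⟩
          rcases lt_or_gt_of_ne huv with hlt | hgt
          · exact ⟨u, v, hlt, hbounds, hne'⟩
          · have hswapfilter : (Finset.range (h-1)).filter (fun t' => XP T t' v u)
                = (Finset.range (h-1)).filter (fun t' => XP T t' u v) :=
              Finset.filter_congr (fun t _ => xp_comm T t v u)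
            refine ⟨v, u, hgt, ?_, ?_⟩
            · rw [hswapfilter]
              exact hbounds
            · rw [hswapfilter]
              exact hne'
    -- injective map from windows to pairs other than {a,b}
    set S := ((Finset.univ : Finset (Fin n × Fin n)).filter fun pr => pr.1 < pr.2) with hSdef
    have hScard : S.card = n.choose 2 := pairs_card n
    set ab' : Fin n × Fin n := if a < b then (a, b) else (b, a) with hab'def
    have hab'S : ab' ∈ S := by
      rw [hab'def]
      split_ifs with hc
      · simp [hSdef, hc]
      · have : b < a := by
          rcases lt_trichotomy a b with h' | h' | h'
          · exact absurd h' hc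
          · exact absurd h' hab
          · exact h'
        simp [hSdef, this]
    have hab'filter : (Finset.range (h-1)).filter (fun t' => XP T t' ab'.1 ab'.2) = Cr := by
      rw [hab'def]
      split_ifs
      · exact hCr.symm
      · rw [hCr]
        exact Finset.filter_congr (fun t _ => xp_comm T t b a)
    set f : ℕ → Fin n × Fin n := fun k =>
      if hk : k + 1 < m then
        ⟨(hwin ⟨k, by omega⟩ ⟨k+1, hk⟩ rfl).choose,
         (hwin ⟨k, by omega⟩ ⟨k+1, hk⟩ rfl).choose_spec.choose⟩
      else ab' with hfdef
    have hfspec : ∀ k (hk : k + 1 < m), (f k).1 < (f k).2 ∧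
        (∀ t ∈ (Finset.range (h-1)).filter (fun t' => XP T t' (f k).1 (f k).2),
          ts ⟨k, by omega⟩ < t ∧ t < ts ⟨k+1, hk⟩) ∧
        ((Finset.range (h-1)).filter (fun t' => XP T t' (f k).1 (f k).2)).Nonempty := by
      intro k hk
      have hsp := (hwin ⟨k, by omega⟩ ⟨k+1, hk⟩ rfl).choose_spec.choose_spec
      rw [hfdef]
      simp only [dif_pos hk]
      exact hsp
    have hmaps : ∀ k ∈ Finset.range (m-1), f k ∈ S.erase ab' := by
      intro k hkmem
      rw [Finset.mem_range] at hkmem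
      have hk : k + 1 < m := by omega
      obtain ⟨hlt, hbounds, hne⟩ := hfspec k hk
      rw [Finset.mem_erase]
      constructor
      · intro hcon
        have hfe : (Finset.range (h-1)).filter (fun t' => XP T t' (f k).1 (f k).2) = Cr := by
          rw [hcon]
          exact hab'filter
        have hmem0 : ts ⟨k, by omega⟩
            ∈ (Finset.range (h-1)).filter (fun t' => XP T t' (f k).1 (f k).2) := by
          rw [hfe]
          exact hts_mem _
        have := hbounds _ hmem0
        omega
      · rw [hSdef, Finset.mem_filter]
        exact ⟨Finset.mem_univ _, hlt⟩
    have hinj_lt : ∀ k k', k < k' → k + 1 < m → k' + 1 < m → f k ≠ f k' := by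
      intro k k' hkk' hk hk' hcon
      obtain ⟨-, hbounds, hne⟩ := hfspec k hk
      obtain ⟨-, hbounds', -⟩ := hfspec k' hk'
      obtain ⟨t, htmem⟩ := hne
      have hA := hbounds t htmem
      rw [hcon] at htmem
      have hB := hbounds' t htmem
      have hmono : ts ⟨k+1, hk⟩ ≤ ts ⟨k', by omega⟩ :=
        hts_mono.monotone (by rw [Fin.mk_le_mk]; omega)
      omega
    have hinj : Set.InjOn f (Finset.range (m-1)) := by
      intro k hkmem k' hk'mem heq
      rw [Finset.coe_range, Set.mem_Iio] at hkmem hk'mem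
      rcases lt_trichotomy k k' with hlt | heq' | hgt
      · exact absurd heq (hinj_lt k k' hlt (by omega) (by omega))
      · exact heq'
      · exact absurd heq.symm (hinj_lt k' k hgt (by omega) (by omega))
    have hcard := Finset.card_le_card_of_injOn f hmaps hinj
    rw [Finset.card_range, Finset.card_erase_of_mem hab'S, hScard] at hcard
    omega
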